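/- For every real constant c ≥ 0 there exists a real constant c' ≥ 0 such that for every natural number d ≥ 2 and all reals m ≥ 1, h ≥ 2, and ν ≥ 1: Σ_{ℓ=0}^{d+2} ∏_{j=2}^{d+1} ( exp( m·ν·exp( j·log h + c·(log j)³ ) ) )^((ℓ choose j)) ≤ exp( m·h·ν·exp( d·log(2h) + c'·(log d)³ ) ). (This is the arithmetic content of the bound on the number of simplices of the (d+2)-skeleton of the (d+1)-st Postnikov stage, obtained by substituting the homotopy-group bound |π_j(X)| ≤ exp(m·log N·exp(j·log h + O((log j)³))) with ν = log N into the product formula |sk_n(P_k)| ≤ Σ_{ℓ=0}^{n} ∏_{j=2}^{k} |π_j(X)|^((ℓ choose j)).) -/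

import Mathlib

lemma choose_le_two_pow' (l j : ℕ) : l.choose j ≤ 2 ^ l := by
  rcases le_or_gt j l with hj | hj
  · calc l.choose j ≤ ∑ i ∈ Finset.range (l + 1), l.choose i :=
          Finset.single_le_sum (fun i _ => Nat.zero_le _) (Finset.mem_range.2 (by omega))
    _ = 2 ^ l := Nat.sum_range_choose l
  · rw [Nat.choose_eq_zero_of_lt hj]; exact Nat.zero_le _

lemma key_scalar (c : ℝ) (hc : 0 ≤ c) (d : ℕ) (hd : 2 ≤ d) :
    2 + 4 * (d : ℝ) * Real.exp (c * (Real.log ((d : ℝ) + 1)) ^ 3) ≤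
      Real.exp ((8 * c + 20) * (Real.log d) ^ 3) := by
  have hd1 : (2 : ℝ) ≤ (d : ℝ) := by exact_mod_cast hd
  set L : ℝ := Real.log d with hL
  set L1 : ℝ := Real.log ((d : ℝ) + 1) with hL1
  have hlog2 : (0.6931471803 : ℝ) < Real.log 2 := Real.log_two_gt_d9
  have hL2 : Real.log 2 ≤ L := Real.log_le_log (by norm_num) hd1
  have hLpos : (0.6931471803 : ℝ) < L := lt_of_lt_of_le hlog2 hL2
  have hL1nn : 0 ≤ L1 := Real.log_nonneg (by linarith)
  have hL1le : L1 ≤ 2 * L := by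
    have h1 : L1 ≤ Real.log ((d : ℝ) ^ 2) :=
      Real.log_le_log (by linarith) (by nlinarith)
    rwa [Real.log_pow, Nat.cast_ofNat] at h1
  have hL1cube : L1 ^ 3 ≤ 8 * L ^ 3 := by
    have h := pow_le_pow_left₀ hL1nn hL1le 3
    nlinarith [h]
  have hE1 : (1 : ℝ) ≤ Real.exp (c * L1 ^ 3) := by
    rw [Real.one_le_exp_iff]; positivity
  have h8d : (0 : ℝ) < 8 * (d : ℝ) := by linarith
  have step1 : 2 + 4 * (d : ℝ) * Real.exp (c * L1 ^ 3) ≤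
      8 * (d : ℝ) * Real.exp (c * L1 ^ 3) := by nlinarith
  have step2 : 8 * (d : ℝ) * Real.exp (c * L1 ^ 3) =
      Real.exp (Real.log (8 * d) + c * L1 ^ 3) := by
    rw [Real.exp_add, Real.exp_log h8d]
  have hlog8d : Real.log (8 * d) ≤ 4 * L := by
    rw [Real.log_mul (by norm_num) (by positivity)]
    have : Real.log 8 = 3 * Real.log 2 := by
      rw [show (8 : ℝ) = 2 ^ 3 by norm_num, Real.log_pow]; push_cast; ring
    linarith [hL2]
  have hL0 : (0 : ℝ) < L := by linarith
  have hfive : (1 : ℝ) ≤ 5 * L ^ 2 := by nlinarith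
  have h4L : 4 * L ≤ 20 * L ^ 3 := by
    nlinarith [mul_le_mul_of_nonneg_left hfive (show (0:ℝ) ≤ 4 * L by linarith)]
  have : Real.log (8 * d) + c * L1 ^ 3 ≤ (8 * c + 20) * L ^ 3 := by
    nlinarith [mul_le_mul_of_nonneg_left hL1cube hc]
  calc 2 + 4 * (d : ℝ) * Real.exp (c * L1 ^ 3)
      ≤ Real.exp (Real.log (8 * d) + c * L1 ^ 3) := by rw [← step2]; exact step1
    _ ≤ Real.exp ((8 * c + 20) * L ^ 3) := Real.exp_le_exp.2 this

open Real in
/-- For every `c ≥ 0` there is `c' ≥ 0` such that for every `d ≥ 2` and all reals `m ≥ 1`,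
`h ≥ 2`, `ν ≥ 1`,
`Σ_{ℓ=0}^{d+2} ∏_{j=2}^{d+1} exp(m·ν·exp(j·log h + c·(log j)³)) ^ (ℓ choose j)
  ≤ exp(m·h·ν·exp(d·log(2h) + c'·(log d)³))`. -/
theorem postnikov_stage_size_bound :
    ∀ c : ℝ, 0 ≤ c → ∃ c' : ℝ, 0 ≤ c' ∧
      ∀ d : ℕ, 2 ≤ d → ∀ m h ν : ℝ, 1 ≤ m → 2 ≤ h → 1 ≤ ν →
        ∑ ℓ ∈ Finset.range (d + 3), ∏ j ∈ Finset.Icc 2 (d + 1),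
            (Real.exp (m * ν *
              Real.exp ((j : ℝ) * Real.log h + c * (Real.log j) ^ 3))) ^ (ℓ.choose j) ≤
          Real.exp (m * h * ν *
            Real.exp ((d : ℝ) * Real.log (2 * h) + c' * (Real.log d) ^ 3)) := by
  intro c hc
  refine ⟨8 * c + 20, by positivity, ?_⟩
  intro d hd m h ν hm hh hν
  have hd1 : (2 : ℝ) ≤ (d : ℝ) := by exact_mod_cast hd
  have hh0 : (0 : ℝ) < h := by linarith
  have hh1 : (1 : ℝ) ≤ h := by linarith
  have hmν : (1 : ℝ) ≤ m * ν := by nlinarith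
  set E1 : ℝ := Real.exp (c * (Real.log ((d : ℝ) + 1)) ^ 3) with hE1def
  have hE1 : (1 : ℝ) ≤ E1 := by
    rw [hE1def, Real.one_le_exp_iff]
    have : 0 ≤ Real.log ((d : ℝ) + 1) := Real.log_nonneg (by linarith)
    positivity
  set P : ℝ := h ^ (d + 1) with hPdef
  have hP1 : (1 : ℝ) ≤ P := one_le_pow₀ hh1
  have hmν0 : (0 : ℝ) ≤ m * ν := by linarith
  have hmP1 : (1 : ℝ) ≤ m * ν * P := by
    calc (1 : ℝ) = 1 * 1 := by ring
      _ ≤ (m * ν) * P := mul_le_mul hmν hP1 zero_le_one hmν0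
  set B : ℝ := m * ν * P * E1 with hBdef
  have hB1 : (1 : ℝ) ≤ B := by
    rw [hBdef]
    calc (1 : ℝ) = 1 * 1 := by ring
      _ ≤ (m * ν * P) * E1 := mul_le_mul hmP1 hE1 zero_le_one (by linarith)
  have hB0 : 0 ≤ B := le_trans zero_le_one hB1
  -- bound on each factor's exponent
  have factor_bound : ∀ j ∈ Finset.Icc 2 (d + 1),
      m * ν * Real.exp ((j : ℝ) * Real.log h + c * (Real.log j) ^ 3) ≤ B := by
    intro j hj
    obtain ⟨hj2, hjd⟩ := Finset.mem_Icc.1 hj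
    have hj1 : (1 : ℝ) ≤ (j : ℝ) := by exact_mod_cast Nat.one_le_of_lt hj2
    have hjd' : (j : ℝ) ≤ (d : ℝ) + 1 := by exact_mod_cast hjd
    have hexp1 : Real.exp ((j : ℝ) * Real.log h) ≤ P := by
      rw [Real.exp_nat_mul, Real.exp_log hh0]
      exact pow_le_pow_right₀ hh1 hjd
    have hexp2 : Real.exp (c * (Real.log j) ^ 3) ≤ E1 := by
      rw [hE1def]
      have h1 : 0 ≤ Real.log (j : ℝ) := Real.log_nonneg hj1
      have h2 : Real.log (j : ℝ) ≤ Real.log ((d : ℝ) + 1) := Real.log_le_log (by linarith) hjd'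
      have h3 : (Real.log (j : ℝ)) ^ 3 ≤ (Real.log ((d : ℝ) + 1)) ^ 3 :=
        pow_le_pow_left₀ h1 h2 3
      exact Real.exp_le_exp.2 (mul_le_mul_of_nonneg_left h3 hc)
    rw [hBdef, Real.exp_add]
    have hmn0 : 0 ≤ m * ν := by linarith
    have := mul_le_mul hexp1 hexp2 (Real.exp_nonneg _) (by positivity)
    nlinarith [Real.exp_pos ((j : ℝ) * Real.log h), Real.exp_pos (c * (Real.log (j : ℝ)) ^ 3)]
  -- bound each term of the sum
  have term_bound : ∀ ℓ ∈ Finset.range (d + 3),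
      ∏ j ∈ Finset.Icc 2 (d + 1),
        (Real.exp (m * ν * Real.exp ((j : ℝ) * Real.log h + c * (Real.log j) ^ 3)))
          ^ (ℓ.choose j) ≤
      Real.exp ((d : ℝ) * ((2 : ℝ) ^ (d + 2) * B)) := by
    intro ℓ hℓ
    have hℓ' : ℓ ≤ d + 2 := by
      have := Finset.mem_range.1 hℓ; omega
    have hrw : ∏ j ∈ Finset.Icc 2 (d + 1),
        (Real.exp (m * ν * Real.exp ((j : ℝ) * Real.log h + c * (Real.log j) ^ 3)))
          ^ (ℓ.choose j) =
        Real.exp (∑ j ∈ Finset.Icc 2 (d + 1),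
          (ℓ.choose j : ℝ) * (m * ν * Real.exp ((j : ℝ) * Real.log h + c * (Real.log j) ^ 3))) := by
      rw [Real.exp_sum]
      exact Finset.prod_congr rfl fun j _ => (Real.exp_nat_mul _ _).symm
    rw [hrw]
    apply Real.exp_le_exp.2
    calc ∑ j ∈ Finset.Icc 2 (d + 1),
          (ℓ.choose j : ℝ) * (m * ν * Real.exp ((j : ℝ) * Real.log h + c * (Real.log j) ^ 3))
        ≤ ∑ j ∈ Finset.Icc 2 (d + 1), (2 : ℝ) ^ (d + 2) * B := by
          apply Finset.sum_le_sum
          intro j hj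
          have hc1 : (ℓ.choose j : ℝ) ≤ (2 : ℝ) ^ (d + 2) := by
            have h1 : ℓ.choose j ≤ 2 ^ (d + 2) :=
              (choose_le_two_pow' ℓ j).trans (Nat.pow_le_pow_right (by norm_num) hℓ')
            exact_mod_cast h1
          have hc0 : (0 : ℝ) ≤ (ℓ.choose j : ℝ) := Nat.cast_nonneg _
          have hA0 : (0 : ℝ) ≤ m * ν * Real.exp ((j : ℝ) * Real.log h + c * (Real.log j) ^ 3) := by
            have := Real.exp_nonneg ((j : ℝ) * Real.log h + c * (Real.log (j : ℝ)) ^ 3)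
            nlinarith
          exact mul_le_mul hc1 (factor_bound j hj) hA0 (by positivity)
      _ = (d : ℝ) * ((2 : ℝ) ^ (d + 2) * B) := by
          have hcard : (Finset.Icc 2 (d + 1)).card = d := by rw [Nat.card_Icc]; omega
          rw [Finset.sum_const, hcard, nsmul_eq_mul]
  -- sum the bounds
  set D : ℝ := (d : ℝ) * ((2 : ℝ) ^ (d + 2) * B) with hDdef
  have sum_bound : ∑ ℓ ∈ Finset.range (d + 3), ∏ j ∈ Finset.Icc 2 (d + 1),
      (Real.exp (m * ν * Real.exp ((j : ℝ) * Real.log h + c * (Real.log j) ^ 3)))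
        ^ (ℓ.choose j) ≤ ((d : ℝ) + 3) * Real.exp D := by
    calc ∑ ℓ ∈ Finset.range (d + 3), ∏ j ∈ Finset.Icc 2 (d + 1),
        (Real.exp (m * ν * Real.exp ((j : ℝ) * Real.log h + c * (Real.log j) ^ 3)))
          ^ (ℓ.choose j)
        ≤ ∑ _ℓ ∈ Finset.range (d + 3), Real.exp D := Finset.sum_le_sum term_bound
      _ = ((d : ℝ) + 3) * Real.exp D := by
          rw [Finset.sum_const, Finset.card_range, nsmul_eq_mul]; push_cast; ring
  set S : ℝ := m * ν * ((2 : ℝ) ^ (d + 1) * P) with hSdef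
  have hpow : ((d : ℝ) + 3) ≤ (2 : ℝ) ^ (d + 1) := by
    have h1 : d + 3 ≤ 2 ^ (d + 1) := by
      have h2 : d < 2 ^ d := Nat.lt_two_pow_self
      have : 2 ^ (d + 1) = 2 * 2 ^ d := by ring
      omega
    exact_mod_cast h1
  have hS : ((d : ℝ) + 3) ≤ Real.exp S := by
    have h2 : ((d : ℝ) + 3) ≤ S := by
      have hq : (0 : ℝ) < (2 : ℝ) ^ (d + 1) := by positivity
      have hq1 : (2 : ℝ) ^ (d + 1) ≤ 2 ^ (d + 1) * P := le_mul_of_one_le_right (le_of_lt hq) hP1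
      have hq2 : (2 : ℝ) ^ (d + 1) * P ≤ m * ν * (2 ^ (d + 1) * P) :=
        le_mul_of_one_le_left (by positivity) hmν
      rw [hSdef]
      linarith
    linarith [Real.add_one_le_exp S]
  have total : ∑ ℓ ∈ Finset.range (d + 3), ∏ j ∈ Finset.Icc 2 (d + 1),
      (Real.exp (m * ν * Real.exp ((j : ℝ) * Real.log h + c * (Real.log j) ^ 3)))
        ^ (ℓ.choose j) ≤ Real.exp (S + D) := by
    rw [Real.exp_add]
    calc _ ≤ ((d : ℝ) + 3) * Real.exp D := sum_bound
      _ ≤ Real.exp S * Real.exp D :=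
          mul_le_mul_of_nonneg_right hS (Real.exp_nonneg _)
  refine total.trans (Real.exp_le_exp.2 ?_)
  -- rewrite the RHS exponent
  have hrhs : Real.exp ((d : ℝ) * Real.log (2 * h) + (8 * c + 20) * (Real.log d) ^ 3) =
      (2 * h) ^ d * Real.exp ((8 * c + 20) * (Real.log d) ^ 3) := by
    rw [Real.exp_add, Real.exp_nat_mul, Real.exp_log (by linarith)]
  rw [hrhs]
  set E2 : ℝ := Real.exp ((8 * c + 20) * (Real.log d) ^ 3) with hE2def
  have key : 2 + 4 * (d : ℝ) * E1 ≤ E2 := key_scalar c hc d hd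
  have hfactor : m * h * ν * ((2 * h) ^ d * E2) = m * ν * P * ((2 : ℝ) ^ d * E2) := by
    rw [mul_pow, hPdef, pow_succ]; ring
  rw [hfactor]
  have hSD : S + D = m * ν * P * ((2 : ℝ) ^ d * (2 + 4 * (d : ℝ) * E1)) := by
    rw [hSdef, hDdef, hBdef]
    have h1 : (2 : ℝ) ^ (d + 1) = 2 ^ d * 2 := by ring
    have h2 : (2 : ℝ) ^ (d + 2) = 2 ^ d * 4 := by ring
    rw [h1, h2]; ring
  rw [hSD]
  have hmP : (0 : ℝ) ≤ m * ν * P := le_trans zero_le_one hmP1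
  apply mul_le_mul_of_nonneg_left _ hmP
  have h2d : (0 : ℝ) ≤ (2 : ℝ) ^ d := by positivity
  exact mul_le_mul_of_nonneg_left key h2d
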